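/- arXiv:2512.24371 — 2 statements merged into one kernel-verified Lean document; each statement's English description precedes it below -/
import Mathlib

section
/- The greatest convex minorant on [0,∞) of the short-call payoff h(x) = −(x−K)₊ is the function h*(x) = −x; that is, x ↦ −x is convex, satisfies −x ≤ −(x−K)₊ for all x ≥ 0, and any convex function g on [0,∞) with g(x) ≤ −(x−K)₊ for all x ≥ 0 satisfies g(x) ≤ −x for all x ≥ 0. -/
/-- The greatest convex minorant on [0,∞) of the short-call payoff h(x) = −(x−K)₊
is h*(x) = −x: x ↦ −x is convex, lies below h on [0,∞), and any convex minorant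
g of h on [0,∞) satisfies g(x) ≤ −x there. -/
theorem short_call_convex_minorant (K : ℝ) (hK : 0 ≤ K) :
    ConvexOn ℝ (Set.Ici (0 : ℝ)) (fun x => -x) ∧
    (∀ x : ℝ, 0 ≤ x → -x ≤ -max (x - K) 0) ∧
    ∀ g : ℝ → ℝ, ConvexOn ℝ (Set.Ici (0 : ℝ)) g →
      (∀ x : ℝ, 0 ≤ x → g x ≤ -max (x - K) 0) →
      ∀ x : ℝ, 0 ≤ x → g x ≤ -x := by
  refine ⟨?_, ?_, ?_⟩
  · exact ConcaveOn.neg (concaveOn_id (convex_Ici (0:ℝ)))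
  · intro x hx
    have : max (x - K) 0 ≤ x := max_le (by linarith) hx
    linarith
  · intro g hg hle x hx
    have hg0 : g 0 ≤ 0 := by
      have := hle 0 le_rfl
      simpa [max_eq_right (by linarith : -K ≤ (0:ℝ))] using this
    rcases eq_or_lt_of_le hx with h0 | hxpos
    · simpa [← h0] using hg0
    · refine le_of_forall_pos_le_add ?_
      intro ε hε
      set t : ℝ := max (max x K) (x * K / ε) + 1 with ht
      have htx : x ≤ t := by
        have := le_max_left x K
        have := le_max_left (max x K) (x * K / ε)
        simp only [ht]; linarith
      have htK : K ≤ t := by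
        have := le_max_right x K
        have := le_max_left (max x K) (x * K / ε)
        simp only [ht]; linarith
      have htKe : x * K / ε ≤ t := by
        have := le_max_right (max x K) (x * K / ε)
        simp only [ht]; linarith
      have htpos : 0 < t := lt_of_lt_of_le hxpos htx
      have hbt : x / t * t = x := div_mul_cancel₀ x (ne_of_gt htpos)
      have ha : 0 ≤ 1 - x / t := by
        have : x / t ≤ 1 := (div_le_one htpos).2 htx
        linarith
      have hb : 0 ≤ x / t := div_nonneg hx htpos.le
      have hcvx := hg.2 (Set.mem_Ici.2 le_rfl) (Set.mem_Ici.2 htpos.le) ha hb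
        (by ring)
      have hc : (1 - x / t) • (0:ℝ) + (x / t) • t = x := by
        simp [smul_eq_mul, hbt]
      rw [hc] at hcvx
      have hgt : g t ≤ -(t - K) := by
        have := hle t htpos.le
        rwa [max_eq_left (by linarith)] at this
      have h1 : g x ≤ (1 - x / t) * g 0 + (x / t) * (-(t - K)) := by
        refine hcvx.trans ?_
        have := mul_le_mul_of_nonneg_left hgt hb
        simp only [smul_eq_mul]
        nlinarith [mul_le_mul_of_nonneg_left hg0 ha]
      have h2 : (x / t) * (-(t - K)) = -x + x * K / t := by
        field_simp
        ring
      have h3 : x * K / t ≤ ε := by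
        rw [div_le_iff₀ htpos]
        have h4 : x * K / ε * ε ≤ t * ε := mul_le_mul_of_nonneg_right htKe hε.le
        have h5 : x * K / ε * ε = x * K := by field_simp
        linarith [h4, h5 ▸ h4]
      nlinarith [mul_le_mul_of_nonneg_left hg0 ha]
end

section
/- Monotonicity in M of the budget equation: the function F(M) = M + ∫_0^{r*(M)} γ(u)·(z(u) − M) du, where z is continuous strictly decreasing, γ ≥ 0 integrable, and r*(M) = inf{u ∈ [0,T] : z(u) < M} ∧ T, is continuous and strictly increasing in M; consequently for any target w with F(inf) ≤ w, the equation F(M) = w has a unique solution. -/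
open MeasureTheory

/-- Monotonicity in `M` of the budget equation: with `z` continuous strictly
decreasing on `[0,T]`, `γ ≥ 0` integrable with `∫_0^T γ < 1`, the function
`F(M) = M + ∫_0^T γ(u)·max(z(u) − M, 0) du` (equal to
`M + ∫_0^{r*(M)} γ(u)(z(u) − M) du`) is continuous and strictly increasing,
hence `F(M) = w` has a unique solution for every target `w`. -/
theorem budget_equation_strict_mono
    (T : ℝ) (hT : 0 < T) (z γ : ℝ → ℝ)
    (hz : Continuous z) (hza : StrictAntiOn z (Set.Icc 0 T))
    (hγ : ∀ u, 0 ≤ γ u) (hγint : IntegrableOn γ (Set.Icc 0 T))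
    (hγlt : (∫ u in Set.Icc (0 : ℝ) T, γ u) < 1) :
    let F : ℝ → ℝ := fun M => M + ∫ u in Set.Icc (0 : ℝ) T, γ u * max (z u - M) 0
    Continuous F ∧ StrictMono F ∧ ∀ w : ℝ, ∃! M : ℝ, F M = w := by
  intro F
  set G : ℝ := ∫ u in Set.Icc (0 : ℝ) T, γ u with hGdef
  have hG0 : 0 ≤ G := integral_nonneg fun u => hγ u
  have hG1 : G < 1 := hγlt
  -- integrability of the integrand for every M
  have hint : ∀ M : ℝ, IntegrableOn (fun u => γ u * max (z u - M) 0) (Set.Icc 0 T) := by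
    intro M
    have hcont : Continuous (fun u => max (z u - M) 0) :=
      (hz.sub continuous_const).max continuous_const
    obtain ⟨C, hC⟩ := (isCompact_Icc (a := (0:ℝ)) (b := T)).exists_bound_of_continuousOn
      hcont.continuousOn
    have hbd : ∀ᵐ u ∂(volume.restrict (Set.Icc (0:ℝ) T)), ‖max (z u - M) 0‖ ≤ C :=
      (ae_restrict_mem measurableSet_Icc).mono fun u hu => hC u hu
    have := Integrable.bdd_mul (c := C) hγint hcont.aestronglyMeasurable.restrict hbd
    simpa [mul_comm, IntegrableOn] using this
  -- key Lipschitz-type bound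
  have key : ∀ a b : ℝ, |F b - F a - (b - a)| ≤ G * |b - a| := by
    intro a b
    have h1 : F b - F a - (b - a)
        = ∫ u in Set.Icc (0:ℝ) T, (γ u * max (z u - b) 0 - γ u * max (z u - a) 0) := by
      rw [integral_sub (hint b) (hint a)]
      simp [F]; ring
    have h2 : ∀ u, |γ u * max (z u - b) 0 - γ u * max (z u - a) 0| ≤ γ u * |b - a| := by
      intro u
      rw [← mul_sub, abs_mul, abs_of_nonneg (hγ u)]
      refine mul_le_mul_of_nonneg_left ?_ (hγ u)
      calc |max (z u - b) 0 - max (z u - a) 0| ≤ |(z u - b) - (z u - a)| :=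
            abs_max_sub_max_le_abs _ _ _
        _ = |b - a| := by rw [abs_sub_comm]; ring_nf
    rw [h1]
    calc |∫ u in Set.Icc (0:ℝ) T, (γ u * max (z u - b) 0 - γ u * max (z u - a) 0)|
        ≤ ∫ u in Set.Icc (0:ℝ) T,
            |γ u * max (z u - b) 0 - γ u * max (z u - a) 0| := by
          simpa [Real.norm_eq_abs] using
            norm_integral_le_integral_norm
              (μ := volume.restrict (Set.Icc (0:ℝ) T))
              (fun u => γ u * max (z u - b) 0 - γ u * max (z u - a) 0)
      _ ≤ ∫ u in Set.Icc (0:ℝ) T, γ u * |b - a| := by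
          refine integral_mono ((hint b).sub (hint a)).abs (hγint.mul_const _) ?_
          intro u; exact h2 u
      _ = G * |b - a| := by rw [integral_mul_const, hGdef]
  -- strict monotonicity
  have hmono : StrictMono F := by
    intro a b hab
    have h := key a b
    have habs : |b - a| = b - a := abs_of_pos (by linarith)
    rw [habs] at h
    have := abs_le.mp h
    nlinarith [this.1, this.2]
  -- continuity (Lipschitz)
  have hcontF : Continuous F := by
    have hlip : LipschitzWith (Real.toNNReal (1 + G)) F := by
      refine LipschitzWith.of_dist_le_mul fun a b => ?_
      have h := key b a
      have h' := abs_le.mp h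
      rw [Real.dist_eq, Real.dist_eq, Real.coe_toNNReal _ (by linarith)]
      have habs : |F a - F b| ≤ |a - b| + G * |a - b| := by
        have heq : F a - F b - (a - b) + (a - b) = F a - F b := by
          generalize F a = p; generalize F b = q; ring
        calc |F a - F b| = |(F a - F b - (a - b)) + (a - b)| := by rw [heq]
          _ ≤ |F a - F b - (a - b)| + |a - b| := abs_add_le _ _
          _ ≤ G * |a - b| + |a - b| := by linarith [h'.2, h'.1, h]
          _ = |a - b| + G * |a - b| := by ring
      nlinarith [abs_nonneg (a - b)]
    exact hlip.continuous
  refine ⟨hcontF, hmono, fun w => ?_⟩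
  -- lower bound point
  have hFw : w ≤ F w := by
    have : 0 ≤ ∫ u in Set.Icc (0:ℝ) T, γ u * max (z u - w) 0 :=
      integral_nonneg fun u => mul_nonneg (hγ u) (le_max_right _ _)
    simp only [F]; linarith
  set C : ℝ := ∫ u in Set.Icc (0:ℝ) T, γ u * max (z u) 0 with hCdef
  set M0 : ℝ := min 0 (min w ((w - C) / (1 - G))) with hM0def
  have hM0w : M0 ≤ w := le_trans (min_le_right _ _) (min_le_left _ _)
  have hM00 : M0 ≤ 0 := min_le_left _ _
  have hM0q : M0 ≤ (w - C) / (1 - G) := le_trans (min_le_right _ _) (min_le_right _ _)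
  have hintC : IntegrableOn (fun u => γ u * max (z u) 0) (Set.Icc 0 T) := by
    have := hint 0; simpa using this
  have hFM0 : F M0 ≤ w := by
    have hpt : ∀ u, γ u * max (z u - M0) 0 ≤ γ u * max (z u) 0 - M0 * γ u := by
      intro u
      have h1 : max (z u - M0) 0 ≤ max (z u) 0 - M0 := by
        rcases le_max_iff.mp (le_refl (max (z u - M0) 0)) with _ | _ <;>
        · apply max_le <;> [skip; skip] <;>
          first
          | (have := le_max_left (z u) 0; linarith)
          | (have := le_max_right (z u) 0; linarith)
      calc γ u * max (z u - M0) 0 ≤ γ u * (max (z u) 0 - M0) :=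
            mul_le_mul_of_nonneg_left h1 (hγ u)
        _ = γ u * max (z u) 0 - M0 * γ u := by ring
    have hintsub : IntegrableOn (fun u => γ u * max (z u) 0 - M0 * γ u) (Set.Icc 0 T) :=
      hintC.sub (hγint.const_mul _)
    have hI : (∫ u in Set.Icc (0:ℝ) T, γ u * max (z u - M0) 0)
        ≤ ∫ u in Set.Icc (0:ℝ) T, (γ u * max (z u) 0 - M0 * γ u) :=
      integral_mono (hint M0) hintsub hpt
    have hIeq : (∫ u in Set.Icc (0:ℝ) T, (γ u * max (z u) 0 - M0 * γ u)) = C - M0 * G := by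
      rw [integral_sub hintC (hγint.const_mul _), integral_const_mul, hCdef, hGdef]
    have hFle : F M0 ≤ M0 * (1 - G) + C := by
      have : F M0 = M0 + ∫ u in Set.Icc (0:ℝ) T, γ u * max (z u - M0) 0 := rfl
      rw [this]; rw [hIeq] at hI; linarith
    have : M0 * (1 - G) ≤ w - C := by
      have h1G : (0:ℝ) < 1 - G := by linarith
      calc M0 * (1 - G) ≤ ((w - C) / (1 - G)) * (1 - G) :=
            mul_le_mul_of_nonneg_right hM0q (le_of_lt h1G)
        _ = w - C := div_mul_cancel₀ _ (ne_of_gt h1G)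
    linarith
  obtain ⟨x, _, hx⟩ := intermediate_value_Icc hM0w hcontF.continuousOn
    (Set.mem_Icc.mpr ⟨hFM0, hFw⟩)
  exact ⟨x, hx, fun y hy => hmono.injective (hy.trans hx.symm)⟩
end
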